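/- Suppose r > 0 is an integer, Σ is an F^r-spanning set for Γ, and 𝓛 ⊆ Σ* is a regular language. Then the set {[u]_{F^r} : u ∈ 𝓛} is (Σ,F^r)-automatic, provided F is injective. -/

import Mathlib

open Pointwise

/-- `[w]_F`: the base-`F` evaluation of a word `w = x₀x₁⋯x_m`,
namely `x₀ + F x₁ + ⋯ + F^m x_m`, with `[∅]_F = 0`. -/
def wordVal {Γ : Type*} [AddCommGroup Γ] (F : AddMonoid.End Γ) : List Γ → Γ
  | [] => 0
  | x :: xs => x + F (wordVal F xs)

/-- `Sig` is an `F`-spanning set for `Γ`. -/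
def IsSpanningSet {Γ : Type*} [AddCommGroup Γ] (F : AddMonoid.End Γ) (Sig : Set Γ) : Prop :=
  Sig.Finite ∧
  (0 : Γ) ∈ Sig ∧ (∀ x ∈ Sig, -x ∈ Sig) ∧
  (∀ x : Γ, F x ∈ Sig → x ∈ Sig) ∧
  (∀ x : Γ, ∃ w : List Γ, (∀ y ∈ w, y ∈ Sig) ∧ wordVal F w = x) ∧
  (∀ x₁ ∈ Sig, ∀ x₂ ∈ Sig, ∀ x₃ ∈ Sig, ∀ x₄ ∈ Sig, ∀ x₅ ∈ Sig,
    ∃ t ∈ Sig, ∃ t' ∈ Sig, x₁ + x₂ + x₃ + x₄ + x₅ = t + F t') ∧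
  (∀ x₁ ∈ Sig, ∀ x₂ ∈ Sig, ∀ x₃ ∈ Sig,
    (∃ y : Γ, x₁ + x₂ + x₃ = F y) → ∃ t ∈ Sig, x₁ + x₂ + x₃ = F t)

/-- `S` is `(Σ,F)`-automatic: the language of words over `Σ` whose base-`F` value lies
in `S` is a regular language. -/
def IsSFAutomatic {Γ : Type*} [AddCommGroup Γ] (F : AddMonoid.End Γ) (Sig : Set Γ)
    (S : Set Γ) : Prop :=
  Language.IsRegular {w : List ↥Sig | wordVal F (w.map Subtype.val) ∈ S}

section Aux

variable {Γ : Type*} [AddCommGroup Γ] (G : AddMonoid.End Γ)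

lemma pow_succ_apply (n : ℕ) (z : Γ) : (G ^ (n + 1)) z = G ((G ^ n) z) := by
  rw [pow_succ']; rfl

lemma wordVal_append (a b : List Γ) :
    wordVal G (a ++ b) = wordVal G a + (G ^ a.length) (wordVal G b) := by
  induction a with
  | nil => simp [wordVal]
  | cons x xs ih =>
      rw [List.cons_append]
      simp only [wordVal, ih, map_add, List.length_cons]
      rw [pow_succ_apply]
      abel

/-- helper: monotonicity of NFA.evalFrom -/
lemma NFA.evalFrom_mono {α σ : Type*} (N : NFA α σ) {S T : Set σ} (h : S ⊆ T) (w : List α) :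
    N.evalFrom S w ⊆ N.evalFrom T w := by
  induction w generalizing S T with
  | nil => simpa [NFA.evalFrom]
  | cons a w ih =>
      have : N.stepSet S a ⊆ N.stepSet T a := by
        intro p hp
        rw [NFA.mem_stepSet] at hp ⊢
        obtain ⟨t, ht, hts⟩ := hp
        exact ⟨t, h ht, hts⟩
      exact ih this

theorem aux_regular (Sig : Set Γ)
    (hfin : Sig.Finite) (h0 : (0:Γ) ∈ Sig) (hneg : ∀ x ∈ Sig, -x ∈ Sig)
    (hdiv : ∀ x : Γ, G x ∈ Sig → x ∈ Sig)
    (h5 : ∀ x₁ ∈ Sig, ∀ x₂ ∈ Sig, ∀ x₃ ∈ Sig, ∀ x₄ ∈ Sig, ∀ x₅ ∈ Sig,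
      ∃ t ∈ Sig, ∃ t' ∈ Sig, x₁ + x₂ + x₃ + x₄ + x₅ = t + G t')
    (L : Language ↥Sig) (hL : L.IsRegular) :
    Language.IsRegular {w : List ↥Sig |
      ∃ u ∈ L, wordVal G (u.map Subtype.val) = wordVal G (w.map Subtype.val)} := by
  classical
  obtain ⟨σM, fM, M, hM⟩ := hL
  -- the carry set
  set Q : Set Γ := {γ : Γ | ∃ a ∈ Sig, ∃ b ∈ Sig, γ = a + b} with hQdef
  have hQ0 : (0:Γ) ∈ Q := ⟨0, h0, 0, h0, by simp⟩
  have hQfin : Q.Finite := by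
    have : Q ⊆ Set.image2 (· + ·) Sig Sig := by
      rintro γ ⟨a, ha, b, hb, rfl⟩; exact ⟨a, ha, b, hb, rfl⟩
    exact (hfin.image2 _ hfin).subset this
  haveI : Fintype ↥Q := hQfin.fintype
  -- the key step lemma
  have hstep : ∀ s ∈ Q, ∀ x ∈ Sig, ∀ y ∈ Sig, ∀ s' : Γ, s + x - y = G s' → s' ∈ Q := by
    rintro s ⟨a, ha, b, hb, rfl⟩ x hx y hy s' hs'
    obtain ⟨t, ht, t', ht', htt⟩ := h5 a ha b hb x hx (-y) (hneg y hy) 0 h0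
    have h1 : G s' = t + G t' := by
      rw [← htt]; rw [← hs']; abel
    have h2 : t = G (s' - t') := by rw [map_sub, h1]; abel
    have h3 : s' - t' ∈ Sig := hdiv _ (h2 ▸ ht)
    exact ⟨s' - t', h3, t', ht', by abel⟩
  -- abbreviation for word values
  set V : List ↥Sig → Γ := fun w => wordVal G (w.map Subtype.val) with hV
  have hVnil : V [] = 0 := rfl
  have hVcons : ∀ (a : ↥Sig) (w : List ↥Sig), V (a :: w) = (a : Γ) + G (V w) := fun a w => rfl
  have hVapp : ∀ (a b : List ↥Sig), V (a ++ b) = V a + (G ^ a.length) (V b) := by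
    intro a b
    simp only [hV, List.map_append, wordVal_append, List.length_map]
  -- the NFA
  set N : NFA ↥Sig (σM × ↥Q × Bool) :=
    { step := fun p y => {p' |
        (p.2.2 = false ∧ p'.2.2 = false ∧
          ∃ x : ↥Sig, p'.1 = M.step p.1 x ∧ (p.2.1:Γ) + x - y = G p'.2.1) ∨
        (p.2.2 = false ∧ p'.2.2 = true ∧ p'.1 = p.1 ∧ p.1 ∈ M.accept ∧
          (p.2.1:Γ) - y = G p'.2.1) ∨
        (p.2.2 = true ∧ p'.2.2 = true ∧ p'.1 = p.1 ∧ (p.2.1:Γ) - y = G p'.2.1)}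
      start := {(M.start, ⟨0, hQ0⟩, false)}
      accept := {p | (p.2.2 = true ∧ (p.2.1:Γ) = 0) ∨
        (p.2.2 = false ∧ ∃ v : List ↥Sig,
          M.evalFrom p.1 v ∈ M.accept ∧ (p.2.1:Γ) + V v = 0)} } with hN
  -- soundness invariant
  have sound : ∀ (w : List ↥Sig) (p : σM × ↥Q × Bool), p ∈ N.eval w →
      (p.2.2 = false ∧ ∃ x : List ↥Sig, x.length = w.length ∧
        M.evalFrom M.start x = p.1 ∧ (G ^ w.length) (p.2.1:Γ) = V x - V w) ∨
      (p.2.2 = true ∧ ∃ u : List ↥Sig, u.length < w.length ∧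
        M.evalFrom M.start u = p.1 ∧ p.1 ∈ M.accept ∧
        (G ^ w.length) (p.2.1:Γ) = V u - V w) := by
    intro w
    induction w using List.reverseRecOn with
    | nil =>
        intro p hp
        simp only [NFA.eval_nil, hN, Set.mem_singleton_iff] at hp
        subst hp
        exact Or.inl ⟨rfl, [], by simp, rfl, by simp [hVnil]⟩
    | append_singleton w y ih =>
        intro p hp
        rw [NFA.eval_append_singleton, NFA.mem_stepSet] at hp
        obtain ⟨p₀, hp₀, hstep'⟩ := hp
        have key := ih p₀ hp₀
        simp only [hN] at hstep'
        rcases hstep' with ⟨hb₀, hb, x, hq, heq⟩ | ⟨hb₀, hb, hq, hacc, heq⟩ |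
          ⟨hb₀, hb, hq, heq⟩
        · -- false → false
          rcases key with ⟨_, x', hlen, hev, hsum⟩ | ⟨hb₀', _⟩
          · refine Or.inl ⟨hb, x' ++ [x], by simp [hlen], ?_, ?_⟩
            · rw [DFA.evalFrom_append_singleton, hev, hq]
            · have : (G ^ (w.length + 1)) (p.2.1:Γ) = (G ^ w.length) (G (p.2.1:Γ)) := by
                rw [pow_succ]; rfl
              rw [List.length_append, List.length_singleton, this, ← heq]
              rw [map_sub, map_add, hsum, hVapp, hVapp, hlen]
              simp [hVcons, hVnil]
              abel
          · rw [hb₀'] at hb₀; exact absurd hb₀ (by simp)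
        · -- false → true
          rcases key with ⟨_, x', hlen, hev, hsum⟩ | ⟨hb₀', _⟩
          · refine Or.inr ⟨hb, x', by simp [hlen], by rw [hev, hq], by rw [hq]; exact hacc, ?_⟩
            have hps : (G ^ (w.length + 1)) (p.2.1:Γ) = (G ^ w.length) (G (p.2.1:Γ)) := by
              rw [pow_succ]; rfl
            rw [List.length_append, List.length_singleton, hps, ← heq]
            rw [map_sub, hsum, hVapp]
            simp [hVcons, hVnil]
            abel
          · rw [hb₀'] at hb₀; exact absurd hb₀ (by simp)
        · -- true → true
          rcases key with ⟨hb₀', _⟩ | ⟨_, u, hlen, hev, hacc, hsum⟩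
          · rw [hb₀'] at hb₀; exact absurd hb₀ (by simp)
          · refine Or.inr ⟨hb, u, by simp; omega, by rw [hev, hq], by rw [hq]; exact hacc, ?_⟩
            have hps : (G ^ (w.length + 1)) (p.2.1:Γ) = (G ^ w.length) (G (p.2.1:Γ)) := by
              rw [pow_succ]; rfl
            rw [List.length_append, List.length_singleton, hps, ← heq]
            rw [map_sub, hsum, hVapp]
            simp [hVcons, hVnil]
            abel
  -- completeness: explicit runs, false states
  have runF : ∀ (w x : List ↥Sig), x.length = w.length → ∀ (q : σM) (e s : Γ) (hs : s ∈ Q),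
      s = V w - V x + (G ^ w.length) e →
      ∃ he : e ∈ Q,
        (M.evalFrom q x, ⟨e, he⟩, false) ∈ N.evalFrom {(q, ⟨s, hs⟩, false)} w := by
    intro w
    induction w with
    | nil =>
        intro x hx q e s hs hsum
        have hx0 : x = [] := List.length_eq_zero_iff.mp hx
        subst hx0
        have : s = e := by simpa [hVnil] using hsum
        subst this
        exact ⟨hs, by simp [NFA.evalFrom_nil]⟩
    | cons y w ih =>
        intro x hx q e s hs hsum
        obtain ⟨a, x', rfl⟩ : ∃ a x', x = a :: x' := by
          cases x with
          | nil => simp at hx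
          | cons a x' => exact ⟨a, x', rfl⟩
        have hx' : x'.length = w.length := by simpa using hx
        simp only [List.length_cons] at hsum
        set s' : Γ := V w - V x' + (G ^ w.length) e with hs'def
        have htrans : s + (a:Γ) - y = G s' := by
          rw [hsum, hVcons, hVcons, pow_succ_apply, hs'def, map_add, map_sub]
          abel
        have hs'Q : s' ∈ Q := hstep s hs a a.2 y y.2 s' htrans
        obtain ⟨he, hmem⟩ := ih x' hx' (M.step q a) e s' hs'Q rfl
        refine ⟨he, ?_⟩
        have hstep1 : ((M.step q a, (⟨s', hs'Q⟩ : ↥Q), false) : σM × ↥Q × Bool) ∈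
            N.step (q, ⟨s, hs⟩, false) y := by
          exact Or.inl ⟨rfl, rfl, a, rfl, htrans⟩
        have hsub : ({((M.step q a, (⟨s', hs'Q⟩ : ↥Q), false) : σM × ↥Q × Bool)} : Set _) ⊆
            N.stepSet {(q, ⟨s, hs⟩, false)} y := by
          intro p hp
          rw [Set.mem_singleton_iff] at hp
          subst hp
          rw [NFA.mem_stepSet]
          exact ⟨_, rfl, hstep1⟩
        rw [NFA.evalFrom_cons]
        exact NFA.evalFrom_mono N hsub w hmem
  -- completeness: explicit runs, true states
  have runT : ∀ (w : List ↥Sig) (q : σM) (e s : Γ) (hs : s ∈ Q),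
      s = V w + (G ^ w.length) e →
      ∃ he : e ∈ Q, (q, ⟨e, he⟩, true) ∈ N.evalFrom {(q, ⟨s, hs⟩, true)} w := by
    intro w
    induction w with
    | nil =>
        intro q e s hs hsum
        have : s = e := by simpa [hVnil] using hsum
        subst this
        exact ⟨hs, by simp [NFA.evalFrom_nil]⟩
    | cons y w ih =>
        intro q e s hs hsum
        simp only [List.length_cons] at hsum
        set s' : Γ := V w + (G ^ w.length) e with hs'def
        have htrans : s - (y:Γ) = G s' := by
          rw [hsum, hVcons, pow_succ_apply, hs'def, map_add]
          abel
        have hs'Q : s' ∈ Q := by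
          refine hstep s hs 0 h0 y y.2 s' ?_
          rw [← htrans]; abel
        obtain ⟨he, hmem⟩ := ih q e s' hs'Q rfl
        refine ⟨he, ?_⟩
        have hstep1 : ((q, (⟨s', hs'Q⟩ : ↥Q), true) : σM × ↥Q × Bool) ∈
            N.step (q, ⟨s, hs⟩, true) y := by
          exact Or.inr (Or.inr ⟨rfl, rfl, rfl, htrans⟩)
        have hsub : ({((q, (⟨s', hs'Q⟩ : ↥Q), true) : σM × ↥Q × Bool)} : Set _) ⊆
            N.stepSet {(q, ⟨s, hs⟩, true)} y := by
          intro p hp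
          rw [Set.mem_singleton_iff] at hp
          subst hp
          rw [NFA.mem_stepSet]
          exact ⟨_, rfl, hstep1⟩
        rw [NFA.evalFrom_cons]
        exact NFA.evalFrom_mono N hsub w hmem
  -- N accepts exactly the target language
  have hNacc : N.accepts = {w : List ↥Sig | ∃ u ∈ L, V u = V w} := by
    ext w
    rw [NFA.mem_accepts]
    constructor
    · rintro ⟨p, hpacc, hpev⟩
      have key := sound w p hpev
      simp only [hN, Set.mem_setOf_eq] at hpacc
      rcases hpacc with ⟨hb, hz⟩ | ⟨hb, v, hvacc, hvsum⟩
      · rcases key with ⟨hb', _⟩ | ⟨_, u, _, hev, hacc, hsum⟩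
        · rw [hb] at hb'; exact absurd hb' (by simp)
        · refine ⟨u, ?_, ?_⟩
          · rw [← hM, DFA.mem_accepts]; rw [DFA.eval]; rw [hev]; exact hacc
          · rw [hz] at hsum
            simp only [map_zero] at hsum
            have := hsum.symm
            rwa [sub_eq_zero] at this
      · rcases key with ⟨_, x, hlen, hev, hsum⟩ | ⟨hb', _⟩
        · refine ⟨x ++ v, ?_, ?_⟩
          · rw [← hM, DFA.mem_accepts, DFA.eval, DFA.evalFrom_of_append, hev]
            exact hvacc
          · rw [hVapp, hlen]
            have : (G ^ w.length) ((p.2.1:Γ) + V v) = 0 := by rw [hvsum, map_zero]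
            rw [map_add] at this
            rw [hsum] at this
            have h2 : V x + (G ^ w.length) (V v) - V w = 0 := by
              rw [← this]; abel
            have := h2
            rw [sub_eq_zero] at this
            exact this
        · rw [hb] at hb'; exact absurd hb' (by simp)
    · rintro ⟨u, huL, huv⟩
      have huM : M.evalFrom M.start u ∈ M.accept := by
        rw [← hM] at huL; exact huL
      by_cases hlen : w.length ≤ u.length
      · -- u at least as long as w
        set x := u.take w.length with hxdef
        set v := u.drop w.length with hvdef
        have hxv : x ++ v = u := List.take_append_drop _ _
        have hxlen : x.length = w.length := by
          simp [hxdef, hlen]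
        have hsum0 : (0:Γ) = V w - V x + (G ^ w.length) (-(V v)) := by
          have : V u = V x + (G ^ x.length) (V v) := by rw [← hVapp, hxv]
          rw [map_neg, hxlen] at *
          rw [this] at huv
          rw [← huv]
          abel
        obtain ⟨he, hmem⟩ := runF w x hxlen M.start (-(V v)) 0 hQ0 hsum0
        refine ⟨(M.evalFrom M.start x, ⟨-(V v), he⟩, false), ?_, hmem⟩
        refine Or.inr ⟨rfl, v, ?_, by simp⟩
        rw [← DFA.evalFrom_of_append, hxv]
        exact huM
      · -- u strictly shorter than w
        push_neg at hlen
        set m := u.length with hmdef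
        set w₁ := w.take m with hw₁def
        have hw₁len : w₁.length = m := by simp [hw₁def]; omega
        obtain ⟨y, w₂, hyw₂⟩ : ∃ y w₂, w.drop m = y :: w₂ := by
          have : w.drop m ≠ [] := by
            intro h
            have := List.drop_eq_nil_iff.mp h
            omega
          cases hd : w.drop m with
          | nil => exact absurd hd this
          | cons y w₂ => exact ⟨y, w₂, rfl⟩
        have hwsplit : w = w₁ ++ y :: w₂ := by
          rw [hw₁def, ← hyw₂, List.take_append_drop]
        set e : Γ := (y:Γ) + G (V w₂) with hedef
        have hsum0 : (0:Γ) = V w₁ - V u + (G ^ w₁.length) e := by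
          have h1 : V w = V w₁ + (G ^ w₁.length) (V (y :: w₂)) := by
            rw [← hVapp, ← hwsplit]
          rw [hVcons] at h1
          rw [← hedef] at h1
          rw [← huv] at h1
          rw [h1]; abel
        have hulen : u.length = w₁.length := by omega
        obtain ⟨he, hmem⟩ := runF w₁ u hulen M.start e 0 hQ0 hsum0
        -- flag transition on y
        have htrans : e - (y:Γ) = G (V w₂) := by rw [hedef]; abel
        have hw₂Q : V w₂ ∈ Q := by
          refine hstep e he 0 h0 y y.2 (V w₂) ?_
          rw [← htrans]; abel
        have hstep1 : ((M.evalFrom M.start u, (⟨V w₂, hw₂Q⟩ : ↥Q), true) : σM × ↥Q × Bool) ∈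
            N.step (M.evalFrom M.start u, ⟨e, he⟩, false) y := by
          exact Or.inr (Or.inl ⟨rfl, rfl, rfl, huM, htrans⟩)
        obtain ⟨he₂, hmem₂⟩ := runT w₂ (M.evalFrom M.start u) 0 (V w₂) hw₂Q (by simp)
        refine ⟨(M.evalFrom M.start u, ⟨0, he₂⟩, true), ?_, ?_⟩
        · exact Or.inl ⟨rfl, rfl⟩
        · -- chain the runs
          have hsub1 : ({((M.evalFrom M.start u, (⟨V w₂, hw₂Q⟩ : ↥Q), true) : σM × ↥Q × Bool)} :
              Set _) ⊆ N.stepSet {(M.evalFrom M.start u, ⟨e, he⟩, false)} y := by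
            intro p hp
            rw [Set.mem_singleton_iff] at hp
            subst hp
            rw [NFA.mem_stepSet]
            exact ⟨_, rfl, hstep1⟩
          have step2 : (M.evalFrom M.start u, (⟨0, he₂⟩ : ↥Q), true) ∈
              N.evalFrom {(M.evalFrom M.start u, ⟨e, he⟩, false)} (y :: w₂) := by
            rw [NFA.evalFrom_cons]
            exact NFA.evalFrom_mono N hsub1 w₂ hmem₂
          have hsub2 : ({((M.evalFrom M.start u, (⟨e, he⟩ : ↥Q), false) : σM × ↥Q × Bool)} :
              Set _) ⊆ N.evalFrom N.start w₁ := by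
            intro p hp
            rw [Set.mem_singleton_iff] at hp
            subst hp
            exact hmem
          have : (M.evalFrom M.start u, (⟨0, he₂⟩ : ↥Q), true) ∈
              N.evalFrom (N.evalFrom N.start w₁) (y :: w₂) :=
            NFA.evalFrom_mono N hsub2 (y :: w₂) step2
          rw [hwsplit]
          have happ : ∀ (S : Set (σM × ↥Q × Bool)) (a b : List ↥Sig),
              N.evalFrom S (a ++ b) = N.evalFrom (N.evalFrom S a) b := by
            intro S a b
            simp [NFA.evalFrom, List.foldl_append]
          rw [happ]
          exact this
  -- conclude regularity, transporting to Type 0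
  have hfin' : Fintype (σM × ↥Q × Bool) := by infer_instance
  refine ⟨Fin (Fintype.card (Set (σM × ↥Q × Bool))), inferInstance,
    DFA.reindex (Fintype.equivFin _) N.toDFA, ?_⟩
  rw [DFA.accepts_reindex, NFA.toDFA_correct, hNacc]

end Aux

/-- If `r > 0`, `Σ` is an `F^r`-spanning set for `Γ`, `F` is
injective, and `𝓛 ⊆ Σ*` is a regular language, then `{[u]_{F^r} : u ∈ 𝓛}` is
`(Σ,F^r)`-automatic. -/
theorem isSFAutomatic_image_of_regular {Γ : Type*} [AddCommGroup Γ]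
    (F : AddMonoid.End Γ) (hF : Function.Injective ⇑F) (r : ℕ) (hr : 0 < r)
    (Sig : Set Γ) (hSig : IsSpanningSet (F ^ r) Sig)
    (L : Language ↥Sig) (hL : L.IsRegular) :
    IsSFAutomatic (F ^ r) Sig
      {x : Γ | ∃ u ∈ L, wordVal (F ^ r) (u.map Subtype.val) = x} := by
  obtain ⟨hfin, h0, hneg, hdiv, hspan, h5, h3⟩ := hSig
  exact aux_regular (F ^ r) Sig hfin h0 hneg hdiv h5 L hL
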